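/- arXiv:1008.2280 — 2 statements merged into one kernel-verified Lean document; each statement's English description precedes it below -/
import Mathlib

section
/- Let V, W be finite-dimensional real vector spaces, φ : V → W a linear map, and D_W ⊆ W × W* a Lagrangian subspace with respect to the pairing ⟨(u,α),(v,β)⟩ = β(u) + α(v). Define the pullback φ*D_W = {(v,α) ∈ V × V* : ∃(w,β) ∈ D_W, φ(v) = w and α = β ∘ φ}. Then φ*D_W is a Lagrangian subspace of V × V*, i.e. (φ*D_W)^⊥ = φ*D_W. -/
open Module

/-- The Pontryagin pairing `⟨(u,α),(v,β)⟩ = β(u) + α(v)` on `V × V*`. -/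
noncomputable def pontryaginPair (V : Type*) [AddCommGroup V] [Module ℝ V] :
    LinearMap.BilinForm ℝ (V × Module.Dual ℝ V) :=
  LinearMap.mk₂ ℝ (fun p q => q.2 p.1 + p.2 q.1)
    (by intro p p' q; simp; ring)
    (by intro c p q; simp; ring)
    (by intro p q q'; simp; ring)
    (by intro c p q; simp; ring)

variable {V W : Type*} [AddCommGroup V] [Module ℝ V] [AddCommGroup W] [Module ℝ W]

/-- The backward image `φ*D = {(v,α) : ∃ (w,β) ∈ D, φ v = w, α = β ∘ φ}` of a subspace
`D ⊆ W × W*` under a linear map `φ : V → W`. -/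
noncomputable def backwardImage (φ : V →ₗ[ℝ] W) (D : Submodule ℝ (W × Module.Dual ℝ W)) :
    Submodule ℝ (V × Module.Dual ℝ V) :=
  Submodule.map (LinearMap.prodMap (LinearMap.id : V →ₗ[ℝ] V) φ.dualMap)
    (Submodule.comap (LinearMap.prodMap φ (LinearMap.id : Module.Dual ℝ W →ₗ[ℝ] Module.Dual ℝ W)) D)

/-- The forward image `φ(D) = {(φ v, β) : (v, β ∘ φ) ∈ D}` of a subspace `D ⊆ V × V*`
under a linear map `φ : V → W`. -/
noncomputable def forwardImage (φ : V →ₗ[ℝ] W) (D : Submodule ℝ (V × Module.Dual ℝ V)) :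
    Submodule ℝ (W × Module.Dual ℝ W) :=
  Submodule.map (LinearMap.prodMap φ (LinearMap.id : Module.Dual ℝ W →ₗ[ℝ] Module.Dual ℝ W))
    (Submodule.comap (LinearMap.prodMap (LinearMap.id : V →ₗ[ℝ] V) φ.dualMap) D)

/-- A scalar functional that kills the kernel of a linear map factors through it. -/
lemma exists_factor {A B : Type*} [AddCommGroup A] [Module ℝ A] [AddCommGroup B] [Module ℝ B]
    (f : A →ₗ[ℝ] B) (g : A →ₗ[ℝ] ℝ) (h : LinearMap.ker f ≤ LinearMap.ker g) :
    ∃ h' : B →ₗ[ℝ] ℝ, h' ∘ₗ f = g := by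
  set g₀ : LinearMap.range f →ₗ[ℝ] ℝ :=
    ((LinearMap.ker f).liftQ g h) ∘ₗ (f.quotKerEquivRange.symm : LinearMap.range f →ₗ[ℝ] _)
  obtain ⟨h', hh'⟩ := LinearMap.exists_extend g₀
  refine ⟨h', ?_⟩
  ext a
  have : h' ((LinearMap.range f).subtype ⟨f a, LinearMap.mem_range_self f a⟩) =
      g₀ ⟨f a, LinearMap.mem_range_self f a⟩ := by rw [← LinearMap.comp_apply, hh']
  simpa [g₀, LinearMap.quotKerEquivRange_symm_apply_image] using this

/-- Membership in the backward image. -/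
lemma mem_backwardImage (φ : V →ₗ[ℝ] W) (D : Submodule ℝ (W × Module.Dual ℝ W))
    (v : V) (α : Module.Dual ℝ V) :
    (v, α) ∈ backwardImage φ D ↔ ∃ β, (φ v, β) ∈ D ∧ α = φ.dualMap β := by
  constructor
  · rintro ⟨⟨v', β⟩, hmem, heq⟩
    simp only [LinearMap.prodMap_apply, LinearMap.id_apply, Prod.mk.injEq] at heq
    obtain ⟨rfl, rfl⟩ := heq
    exact ⟨β, hmem, rfl⟩
  · rintro ⟨β, hmem, rfl⟩
    exact ⟨(v, β), by simpa using hmem, by simp⟩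

set_option maxHeartbeats 1000000 in
/-- The backward image of a Lagrangian subspace is Lagrangian. -/
theorem backwardImage_lagrangian [FiniteDimensional ℝ V] [FiniteDimensional ℝ W]
    (φ : V →ₗ[ℝ] W) (D : Submodule ℝ (W × Module.Dual ℝ W))
    (hD : LinearMap.BilinForm.orthogonal (pontryaginPair W) D = D) :
    LinearMap.BilinForm.orthogonal (pontryaginPair V) (backwardImage φ D)
      = backwardImage φ D := by
  apply le_antisymm
  · -- hard direction: the orthogonal is contained in the backward image
    rintro ⟨v, α⟩ hva
    rw [LinearMap.BilinForm.mem_orthogonal_iff] at hva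
    -- the key hypothesis, unfolded
    have H : ∀ (v' : V) (β : Module.Dual ℝ W), (φ v', β) ∈ D → α v' + β (φ v) = 0 := by
      intro v' β hmem
      have := hva (v', φ.dualMap β) ((mem_backwardImage φ D v' _).2 ⟨β, hmem, rfl⟩)
      simpa [pontryaginPair] using this
    -- α kills ker φ, so it factors as γ ∘ φ
    have hker : LinearMap.ker φ ≤ LinearMap.ker α := by
      intro x hx
      have h0 : (φ x, (0 : Module.Dual ℝ W)) ∈ D := by
        rw [LinearMap.mem_ker.mp hx]
        exact D.zero_mem
      have := H x 0 h0
      simpa using this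
    obtain ⟨γ, hγ⟩ := exists_factor φ α hker
    -- the functional F on D
    set j : (W × Module.Dual ℝ W) →ₗ[ℝ] ℝ := -((pontryaginPair W) (φ v, γ)) with hj
    set F : D →ₗ[ℝ] ℝ := j ∘ₗ D.subtype with hF
    set π : D →ₗ[ℝ] (W ⧸ LinearMap.range φ) :=
      (LinearMap.range φ).mkQ ∘ₗ (LinearMap.fst ℝ W (Module.Dual ℝ W)) ∘ₗ D.subtype with hπ
    have hkerπ : LinearMap.ker π ≤ LinearMap.ker F := by
      rintro ⟨⟨w, ε⟩, hwε⟩ hmem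
      simp only [LinearMap.mem_ker, hπ, LinearMap.comp_apply, Submodule.mkQ_apply,
        Submodule.Quotient.mk_eq_zero, LinearMap.mem_range] at hmem
      obtain ⟨x, rfl⟩ := hmem
      have hHx := H x ε hwε
      have hγx : γ (φ x) = α x := by rw [← hγ]; rfl
      simp only [LinearMap.mem_ker, hF, hj, pontryaginPair, LinearMap.comp_apply,
        Submodule.coe_subtype, LinearMap.neg_apply, LinearMap.mk₂_apply, hγx]
      linarith
    obtain ⟨h', hh'⟩ := exists_factor (A := ↥D) (B := W ⧸ LinearMap.range φ) π F hkerπ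
    set δ : Module.Dual ℝ W := h' ∘ₗ (LinearMap.range φ).mkQ with hδ
    set β₀ : Module.Dual ℝ W := γ + δ with hβ₀
    have hδφ : ∀ x : V, δ (φ x) = 0 := by
      intro x
      simp [hδ, (Submodule.Quotient.mk_eq_zero _).2 (LinearMap.mem_range_self φ x)]
    have hδD : ∀ w ε, (w, ε) ∈ D → δ w = -(ε (φ v)) - γ w := by
      intro w ε hwε
      have : h' (π ⟨(w, ε), hwε⟩) = F ⟨(w, ε), hwε⟩ := by rw [← LinearMap.comp_apply, hh']
      simp only [hπ, hF, hj, pontryaginPair, LinearMap.comp_apply, Submodule.coe_subtype,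
        LinearMap.fst_apply, Submodule.mkQ_apply, LinearMap.neg_apply, LinearMap.mk₂_apply]
        at this
      simp only [hδ, LinearMap.comp_apply, Submodule.mkQ_apply]
      linarith
    have hmemD : (φ v, β₀) ∈ D := by
      rw [← hD, LinearMap.BilinForm.mem_orthogonal_iff]
      rintro ⟨w, ε⟩ hwε
      have := hδD w ε hwε
      simp only [pontryaginPair, LinearMap.mk₂_apply, hβ₀, LinearMap.add_apply, this]
      ring
    refine (mem_backwardImage φ D v α).2 ⟨β₀, hmemD, ?_⟩
    ext x
    have hγx : γ (φ x) = α x := by rw [← hγ]; rfl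
    simp [hβ₀, LinearMap.dualMap_apply, hγx, hδφ x]
  · -- easy direction
    rintro ⟨v, α⟩ hva
    obtain ⟨β, hmem, rfl⟩ := (mem_backwardImage φ D v α).1 hva
    rw [LinearMap.BilinForm.mem_orthogonal_iff]
    rintro ⟨v', α'⟩ hv'
    obtain ⟨β', hmem', rfl⟩ := (mem_backwardImage φ D v' α').1 hv'
    have hβD : (φ v, β) ∈ LinearMap.BilinForm.orthogonal (pontryaginPair W) D := by
      rw [hD]; exact hmem
    rw [LinearMap.BilinForm.mem_orthogonal_iff] at hβD
    have h1 := hβD (φ v', β') hmem'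
    simp only [pontryaginPair, LinearMap.mk₂_apply] at h1 ⊢
    simpa [LinearMap.dualMap_apply] using h1
end

section
/- Let V, W be finite-dimensional real vector spaces, φ : V → W a surjective linear map, and D_V ⊆ V × V* a Lagrangian subspace. Then the pushforward φ(D_V) = {(φ(v), β) : β ∈ W*, (v, β ∘ φ) ∈ D_V} is a Lagrangian subspace of W × W*. -/
open Module

variable {V W : Type*} [AddCommGroup V] [Module ℝ V] [AddCommGroup W] [Module ℝ W]

lemma pontryaginPair_apply (p q : V × Module.Dual ℝ V) :
    pontryaginPair V p q = q.2 p.1 + p.2 q.1 := rfl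

lemma pontryaginPair_refl : (pontryaginPair V).IsRefl := by
  intro p q h
  rw [pontryaginPair_apply] at h ⊢
  linarith

lemma pontryaginPair_nondeg [FiniteDimensional ℝ V] : (pontryaginPair V).Nondegenerate := by
  refine (LinearMap.IsRefl.nondegenerate_iff_separatingLeft (B := pontryaginPair V) pontryaginPair_refl).mpr ?_
  intro p h
  have h1 : p.2 = 0 := by
    ext v
    have := h (v, 0)
    simpa [pontryaginPair_apply] using this
  have h2 : p.1 = 0 := by
    rw [← Module.forall_dual_apply_eq_zero_iff ℝ]
    intro β
    have := h (0, β)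
    simpa [pontryaginPair_apply] using this
  exact Prod.ext h2 h1

lemma orthogonal_sup {R M : Type*} [CommRing R] [AddCommGroup M] [Module R M]
    (B : LinearMap.BilinForm R M) (N L : Submodule R M) :
    B.orthogonal (N ⊔ L) = B.orthogonal N ⊓ B.orthogonal L := by
  apply le_antisymm
  · exact le_inf (B.orthogonal_le le_sup_left) (B.orthogonal_le le_sup_right)
  · rintro m ⟨hm1, hm2⟩ n hn
    rcases Submodule.mem_sup.mp hn with ⟨d, hd, k, hk, rfl⟩
    have := hm1 d hd
    have := hm2 k hk
    rw [map_add, LinearMap.add_apply, hm1 d hd, hm2 k hk, add_zero]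

/-- The forward image of a Lagrangian subspace under a surjective linear map is Lagrangian. -/
theorem forwardImage_lagrangian [FiniteDimensional ℝ V] [FiniteDimensional ℝ W]
    (φ : V →ₗ[ℝ] W) (hφ : Function.Surjective φ) (D : Submodule ℝ (V × Module.Dual ℝ V))
    (hD : LinearMap.BilinForm.orthogonal (pontryaginPair V) D = D) :
    LinearMap.BilinForm.orthogonal (pontryaginPair W) (forwardImage φ D)
      = forwardImage φ D := by
  set E := forwardImage φ D with hE
  have memE : ∀ p : W × Module.Dual ℝ W, p ∈ E ↔
      ∃ v : V, (v, φ.dualMap p.2) ∈ D ∧ φ v = p.1 := by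
    intro p
    constructor
    · rintro ⟨⟨v, β⟩, hv, rfl⟩
      exact ⟨v, hv, rfl⟩
    · rintro ⟨v, hv, h1⟩
      exact ⟨(v, p.2), hv, by simp [h1]⟩
  -- isotropy of D
  have hDiso : ∀ x ∈ D, ∀ y ∈ D, pontryaginPair V x y = 0 := by
    intro x hx y hy
    rw [← hD] at hy
    exact hy x hx
  apply le_antisymm
  · -- E^⊥ ≤ E
    rintro ⟨w, γ⟩ hwγ
    obtain ⟨v₀, hv₀⟩ := hφ w
    set K : Submodule ℝ (V × Module.Dual ℝ V) := (LinearMap.ker φ).prod ⊥ with hK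
    have key : (v₀, φ.dualMap γ) ∈ D ⊔ K := by
      rw [← LinearMap.BilinForm.orthogonal_orthogonal pontryaginPair_nondeg
        pontryaginPair_refl (D ⊔ K), orthogonal_sup, hD]
      rintro ⟨v, α⟩ ⟨hvD, hvK⟩
      -- α vanishes on ker φ
      have hker : ∀ k ∈ LinearMap.ker φ, α k = 0 := by
        intro k hk
        have := hvK (k, 0) (by simp [hK, hk])
        simpa [LinearMap.BilinForm.IsOrtho, pontryaginPair_apply] using this
      have hα : α ∈ LinearMap.range φ.dualMap := by
        rw [LinearMap.range_dualMap_eq_dualAnnihilator_ker]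
        rw [Submodule.mem_dualAnnihilator]
        exact hker
      obtain ⟨β, rfl⟩ := hα
      have hEmem : ((φ v, β) : W × Module.Dual ℝ W) ∈ E :=
        (memE _).mpr ⟨v, hvD, rfl⟩
      have := hwγ _ hEmem
      simp only [LinearMap.BilinForm.IsOrtho, pontryaginPair_apply] at this ⊢
      simp only [LinearMap.dualMap_apply', hv₀]
      simpa [hv₀] using this
    rcases Submodule.mem_sup.mp key with ⟨d, hd, k, hk, hdk⟩
    rw [hK, Submodule.mem_prod] at hk
    obtain ⟨hk1, hk2⟩ := hk
    rw [(memE _)]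
    refine ⟨v₀ - k.1, ?_, ?_⟩
    · have : ((v₀, φ.dualMap γ) : V × Module.Dual ℝ V) - k = d := by
        rw [← hdk]; abel
      have hk2' : k.2 = 0 := by simpa using hk2
      have : ((v₀ - k.1, φ.dualMap γ) : V × Module.Dual ℝ V) = d := by
        rw [← this]; ext <;> simp [hk2']
      rw [this]; exact hd
    · simp only [map_sub, hv₀, LinearMap.mem_ker.mp hk1, sub_zero]
  · -- E ≤ E^⊥
    rintro p hp q hq
    rcases (memE _).mp hp with ⟨v, hv, h1⟩
    rcases (memE _).mp hq with ⟨v', hv', h1'⟩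
    have := hDiso _ hv' _ hv
    simp only [LinearMap.BilinForm.IsOrtho, pontryaginPair_apply] at this ⊢
    simp only [LinearMap.dualMap_apply', LinearMap.comp_apply] at this
    rw [← h1, ← h1']
    linarith
end
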